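/- For every positive integer L, the following identity of formal power series in q and z holds: ∑_{n,m ≥ 0} a₂(L,m,n)·z^m·qⁿ = (1 + q + z·q²/(1−q)) · ∏_{k=2}^{L} ( 1 + z·q^{2k−1} + z²·q^{2(2k−1)}/(1 − q^{2k−1}) ). -/

import Mathlib

/-!
Statement 8: For every positive integer `L`, as formal power series in the two variables
`q` and `z` over `ℚ`,
`∑_{n,m ≥ 0} a₂(L,m,n) z^m qⁿ
   = (1 + q + z q²/(1−q)) ∏_{k=2}^{L} (1 + z q^{2k−1} + z² q^{2(2k−1)}/(1−q^{2k−1}))`,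
where `a₂(L,m,n)` is the number of partitions of `n` into odd parts with largest part at
most `2L−1` having exactly `m` cells of hook length 2.  The identity is stated
coefficientwise: the coefficient of `z^m qⁿ` of the right-hand side equals `a₂(L,m,n)`.
-/

/-- `λ'_j`: the number of parts of `π` that are at least `j` (the conjugate partition). -/
def conjPart (π : Multiset ℕ) (j : ℕ) : ℕ := (π.filter (fun p => j ≤ p)).card

/-- `λ_i`: the `i`-th largest part of `π` (1-indexed). -/
def rowPart (π : Multiset ℕ) (i : ℕ) : ℕ :=
  ((Finset.Icc 1 π.sum).filter (fun j => i ≤ conjPart π j)).card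

/-- The number of cells of hook length `t` in the Young diagram of `π`:
cells `(i,j)` with `1 ≤ i`, `1 ≤ j ≤ λ_i` and `λ_i + λ'_j − i − j + 1 = t`. -/
def hookCount (π : Multiset ℕ) (t : ℕ) : ℕ :=
  (((Finset.Icc 1 π.sum) ×ˢ (Finset.Icc 1 π.sum)).filter
    (fun c => c.2 ≤ rowPart π c.1 ∧ rowPart π c.1 + conjPart π c.2 + 1 = t + c.1 + c.2)).card

/-- `a₂(L,m,n)`: the number of partitions of `n` into odd parts with largest part at most
`2L−1` having exactly `m` cells of hook length 2. -/
def a2Lmn (L m n : ℕ) : ℕ :=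
  ((Nat.Partition.odds n).filter
    (fun π => (∀ p ∈ π.parts, p ≤ 2 * L - 1) ∧ hookCount π.parts 2 = m)).card

/-- The variable `q` in `ℚ⟦q,z⟧`. -/
noncomputable def qv : MvPowerSeries (Fin 2) ℚ := MvPowerSeries.X 0

/-- The variable `z` in `ℚ⟦q,z⟧`. -/
noncomputable def zv : MvPowerSeries (Fin 2) ℚ := MvPowerSeries.X 1




lemma conjPart_le_card (π : Multiset ℕ) (j : ℕ) : conjPart π j ≤ Multiset.card π :=
  Multiset.card_le_card (Multiset.filter_le _ _)

lemma conjPart_anti (π : Multiset ℕ) {j j' : ℕ} (h : j ≤ j') :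
    conjPart π j' ≤ conjPart π j :=
  Multiset.card_le_card (Multiset.monotone_filter_right _ (fun _ ha => le_trans h ha))

lemma card_le_sum (π : Multiset ℕ) (hpos : ∀ p ∈ π, 1 ≤ p) : Multiset.card π ≤ π.sum := by
  simpa using Multiset.card_nsmul_le_sum hpos

lemma conjPart_eq_zero (π : Multiset ℕ) {j : ℕ} (h : π.sum < j) : conjPart π j = 0 := by
  rw [conjPart, Multiset.card_eq_zero, Multiset.filter_eq_nil]
  intro p hp hle
  exact absurd (Multiset.single_le_sum (fun x _ => Nat.zero_le x) p hp) (by omega)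

lemma conjPart_succ (π : Multiset ℕ) (j : ℕ) :
    conjPart π j = π.count j + conjPart π (j + 1) := by
  induction π using Multiset.induction_on with
  | empty => simp [conjPart]
  | cons a s ih =>
      simp only [conjPart, Multiset.filter_cons, Multiset.card_add, Multiset.count_cons] at *
      split_ifs <;> simp_all <;> omega

lemma count_le_conjPart (π : Multiset ℕ) (j : ℕ) : π.count j ≤ conjPart π j := by
  have := conjPart_succ π j; omega

lemma mem_downclosed_iff (S : Finset ℕ) (h0 : 0 ∉ S)
    (hdc : ∀ b ∈ S, ∀ a, 1 ≤ a → a ≤ b → a ∈ S) (j : ℕ) :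
    j ∈ S ↔ 1 ≤ j ∧ j ≤ S.card := by
  rcases S.eq_empty_or_nonempty with h | h
  · simp [h]
    omega
  obtain ⟨M, hM⟩ : ∃ M, S.max' h = M := ⟨_, rfl⟩
  have hMS : M ∈ S := hM ▸ S.max'_mem h
  have hS : S = Finset.Icc 1 M := by
    ext x
    simp only [Finset.mem_Icc]
    exact ⟨fun hx => ⟨Nat.one_le_iff_ne_zero.2 fun h' => h0 (h' ▸ hx), hM ▸ S.le_max' x hx⟩,
      fun hx => hdc _ hMS x hx.1 hx.2⟩
  rw [hS, Nat.card_Icc, Finset.mem_Icc]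
  omega

lemma le_rowPart_iff (π : Multiset ℕ) {i j : ℕ} (hi : 1 ≤ i) (hj : 1 ≤ j) :
    j ≤ rowPart π i ↔ i ≤ conjPart π j := by
  classical
  set S := (Finset.Icc 1 π.sum).filter (fun j => i ≤ conjPart π j) with hSdef
  have h0 : 0 ∉ S := by simp [hSdef]
  have hdc : ∀ b ∈ S, ∀ a, 1 ≤ a → a ≤ b → a ∈ S := by
    intro b hb a ha hab
    simp only [hSdef, Finset.mem_filter, Finset.mem_Icc] at hb ⊢
    exact ⟨⟨ha, le_trans hab hb.1.2⟩, le_trans hb.2 (conjPart_anti π hab)⟩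
  have hrow : rowPart π i = S.card := rfl
  rw [hrow]
  constructor
  · intro h
    have hmem := (mem_downclosed_iff S h0 hdc j).2 ⟨hj, h⟩
    simp only [hSdef, Finset.mem_filter] at hmem
    exact hmem.2
  · intro h
    have hjn : j ≤ π.sum := by
      by_contra hc
      have := conjPart_eq_zero π (j := j) (by omega)
      omega
    have hmem : j ∈ S := by
      simp only [hSdef, Finset.mem_filter, Finset.mem_Icc]
      exact ⟨⟨hj, hjn⟩, h⟩
    exact ((mem_downclosed_iff S h0 hdc j).1 hmem).2

lemma odd_ge_three {d : ℕ} (h : Odd d) (h2 : 2 ≤ d) : 3 ≤ d := by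
  rw [Nat.odd_iff] at h; omega

lemma hookCount_two_eq (π : Multiset ℕ) (hodd : ∀ p ∈ π, Odd p) :
    hookCount π 2 = (π.toFinset.filter (fun d => 3 ≤ d)).card
      + (π.toFinset.filter (fun d => 2 ≤ π.count d)).card := by
  classical
  have hpos : ∀ p ∈ π, 1 ≤ p := fun p hp => (hodd p hp).pos
  have hsum : ∀ p ∈ π, p ≤ π.sum := fun p hp =>
    Multiset.single_le_sum (fun x _ => Nat.zero_le x) p hp
  have hcard : Multiset.card π ≤ π.sum := card_le_sum π hpos
  rw [hookCount]
  have hset : ((Finset.Icc 1 π.sum) ×ˢ (Finset.Icc 1 π.sum)).filter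
      (fun c => c.2 ≤ rowPart π c.1 ∧ rowPart π c.1 + conjPart π c.2 + 1 = 2 + c.1 + c.2)
      = ((π.toFinset.filter (fun d => 3 ≤ d)).image
            (fun d => (conjPart π (d - 1), d - 1)))
        ∪ ((π.toFinset.filter (fun d => 2 ≤ π.count d)).image
            (fun d => (conjPart π d - 1, d))) := by
    ext ⟨i, j⟩
    simp only [Finset.mem_filter, Finset.mem_product, Finset.mem_Icc, Finset.mem_union,
      Finset.mem_image, Multiset.mem_toFinset, Prod.mk.injEq]
    constructor
    · rintro ⟨⟨⟨hi1, hin⟩, ⟨hj1, hjn⟩⟩, hjle, heq⟩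
      have hicj : i ≤ conjPart π j := (le_rowPart_iff π hi1 hj1).1 hjle
      have key : (rowPart π i = j + 1 ∧ conjPart π j = i) ∨
          (rowPart π i = j ∧ conjPart π j = i + 1) := by omega
      rcases key with ⟨hl, hcj⟩ | ⟨hl, hcj⟩
      · left
        have h1 : i ≤ conjPart π (j + 1) := (le_rowPart_iff π hi1 (by omega)).1 (by omega)
        have h2 : ¬ (i ≤ conjPart π (j + 2)) := fun hcon => by
          have := (le_rowPart_iff π hi1 (by omega)).2 hcon; omega
        have hcs := conjPart_succ π (j + 1)
        rw [show j + 1 + 1 = j + 2 from rfl] at hcs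
        have hmem : (j + 1) ∈ π := by
          rw [← Multiset.count_pos]; omega
        refine ⟨j + 1, ⟨hmem, odd_ge_three (hodd _ hmem) (by omega)⟩, ?_, ?_⟩
        · rw [show j + 1 - 1 = j from rfl]; omega
        · omega
      · right
        have h2 : ¬ (i ≤ conjPart π (j + 1)) := fun hcon => by
          have := (le_rowPart_iff π hi1 (by omega)).2 hcon; omega
        have hcs := conjPart_succ π j
        have hmem : j ∈ π := by rw [← Multiset.count_pos]; omega
        exact ⟨j, ⟨hmem, by omega⟩, by omega, rfl⟩
    · rintro (⟨d, ⟨hdmem, hd3⟩, hci, hdj⟩ | ⟨d, ⟨hdmem, hd2⟩, hci, hdj⟩)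
      · -- horizontal cell from part d ≥ 3
        subst hdj
        have hdsum : d ≤ π.sum := hsum d hdmem
        have hcount : 1 ≤ π.count d := Multiset.count_pos.2 hdmem
        have hcountd1 : π.count (d - 1) = 0 := by
          rw [Multiset.count_eq_zero]
          intro hcon
          have h1 := Nat.odd_iff.1 (hodd _ hcon)
          have h2 := Nat.odd_iff.1 (hodd _ hdmem)
          omega
        have hcs1 := conjPart_succ π (d - 1)
        have hd11 : d - 1 + 1 = d := by omega
        rw [hd11] at hcs1
        have hcs2 := conjPart_succ π d
        have hcd1 : 1 ≤ conjPart π d := le_trans hcount (count_le_conjPart π d)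
        have hccard := conjPart_le_card π (d - 1)
        have hi1 : 1 ≤ i := by omega
        have hrowge : d ≤ rowPart π i :=
          (le_rowPart_iff π hi1 (by omega)).2 (by omega)
        have hrowlt : ¬ (d + 1 ≤ rowPart π i) := fun hcon => by
          have := (le_rowPart_iff π hi1 (by omega)).1 hcon
          omega
        refine ⟨⟨⟨by omega, by omega⟩, by omega, by omega⟩, by omega, by omega⟩
      · -- vertical cell from part d with multiplicity ≥ 2
        subst hdj
        have hdsum : d ≤ π.sum := hsum d hdmem
        have hdpos : 1 ≤ d := hpos d hdmem
        have hcs2 := conjPart_succ π d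
        have hcd : 2 ≤ conjPart π d := le_trans hd2 (count_le_conjPart π d)
        have hccard := conjPart_le_card π d
        have hi1 : 1 ≤ i := by omega
        have hrowge : d ≤ rowPart π i :=
          (le_rowPart_iff π hi1 (by omega)).2 (by omega)
        have hrowlt : ¬ (d + 1 ≤ rowPart π i) := fun hcon => by
          have := (le_rowPart_iff π hi1 (by omega)).1 hcon
          omega
        refine ⟨⟨⟨by omega, by omega⟩, by omega, by omega⟩, by omega, by omega⟩
  rw [hset, Finset.card_union_of_disjoint, Finset.card_image_of_injOn,
    Finset.card_image_of_injOn]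
  · intro a ha b hb hab
    simp only [Finset.coe_filter, Set.mem_setOf_eq, Multiset.mem_toFinset] at ha hb
    have := congrArg Prod.snd hab
    simp only at this
    omega
  · intro a ha b hb hab
    simp only [Finset.coe_filter, Set.mem_setOf_eq, Multiset.mem_toFinset] at ha hb
    have := congrArg Prod.snd hab
    simp only at this
    omega
  · rw [Finset.disjoint_left]
    rintro ⟨x, y⟩ hx hy
    simp only [Finset.mem_image, Finset.mem_filter, Multiset.mem_toFinset, Prod.mk.injEq] at hx hy
    obtain ⟨d, ⟨hdm, hd3⟩, _, hdy⟩ := hx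
    obtain ⟨d', ⟨hdm', hd2⟩, _, hdy'⟩ := hy
    have h1 := Nat.odd_iff.1 (hodd _ hdm)
    have h2 := Nat.odd_iff.1 (hodd _ hdm')
    omega


def eexp (k a : ℕ) : ℕ := if k = 1 then (if 2 ≤ a then 1 else 0) else min a 2

noncomputable def Gser (k : ℕ) : MvPowerSeries (Fin 2) ℚ :=
  fun s => if (2 * k - 1) ∣ s 0 ∧ s 1 = eexp k (s 0 / (2 * k - 1)) then 1 else 0

noncomputable def geomSer (d : ℕ) : MvPowerSeries (Fin 2) ℚ :=
  fun s => if d ∣ s 0 ∧ s 1 = 0 then 1 else 0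

lemma coeff_Gser (k : ℕ) (s : Fin 2 →₀ ℕ) :
    MvPowerSeries.coeff s (Gser k)
      = if (2 * k - 1) ∣ s 0 ∧ s 1 = eexp k (s 0 / (2 * k - 1)) then 1 else 0 := rfl

lemma coeff_geomSer (d : ℕ) (s : Fin 2 →₀ ℕ) :
    MvPowerSeries.coeff s (geomSer d) = if d ∣ s 0 ∧ s 1 = 0 then 1 else 0 := rfl

lemma fin2_eq_iff (s : Fin 2 →₀ ℕ) (a b : ℕ) :
    s = Finsupp.single 0 a + Finsupp.single 1 b ↔ s 0 = a ∧ s 1 = b := by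
  constructor
  · rintro rfl
    simp [Finsupp.single_apply]
  · rintro ⟨h0, h1⟩
    ext x
    fin_cases x <;> simp [Finsupp.single_apply] <;> omega

lemma fin2_eq_zero_iff (s : Fin 2 →₀ ℕ) : s = 0 ↔ s 0 = 0 ∧ s 1 = 0 := by
  constructor
  · rintro rfl; simp
  · rintro ⟨h0, h1⟩
    ext x
    fin_cases x <;> simp <;> omega

lemma fin2_le_iff (s : Fin 2 →₀ ℕ) (a b : ℕ) :
    Finsupp.single 0 a + Finsupp.single 1 b ≤ s ↔ a ≤ s 0 ∧ b ≤ s 1 := by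
  rw [Finsupp.le_def]
  constructor
  · intro h
    constructor
    · have := h 0; simpa [Finsupp.single_apply] using this
    · have := h 1; simpa [Finsupp.single_apply] using this
  · rintro ⟨h0, h1⟩ i
    fin_cases i <;> simp [Finsupp.single_apply] <;> assumption

lemma fin2_sub_apply0 (s t : Fin 2 →₀ ℕ) : (s - t) 0 = s 0 - t 0 :=
  Finsupp.tsub_apply s t 0

lemma fin2_sub_apply1 (s t : Fin 2 →₀ ℕ) : (s - t) 1 = s 1 - t 1 :=
  Finsupp.tsub_apply s t 1

lemma fin2_single_add_apply0 (a b : ℕ) :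
    ((Finsupp.single (0 : Fin 2) a + Finsupp.single 1 b : Fin 2 →₀ ℕ)) 0 = a := by
  simp [Finsupp.single_apply]

lemma fin2_single_add_apply1 (a b : ℕ) :
    ((Finsupp.single (0 : Fin 2) a + Finsupp.single 1 b : Fin 2 →₀ ℕ)) 1 = b := by
  simp [Finsupp.single_apply]

lemma zq_monomial (a b : ℕ) :
    zv ^ a * qv ^ b
      = MvPowerSeries.monomial (Finsupp.single 0 b + Finsupp.single 1 a) 1 := by
  rw [zv, qv, MvPowerSeries.X_pow_eq, MvPowerSeries.X_pow_eq,
    MvPowerSeries.monomial_mul_monomial, one_mul, add_comm]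

lemma qv_pow_monomial (b : ℕ) :
    qv ^ b = MvPowerSeries.monomial (Finsupp.single 0 b + Finsupp.single 1 0) 1 := by
  rw [qv, MvPowerSeries.X_pow_eq]
  simp

lemma geom_mul (d : ℕ) (hd : 1 ≤ d) : geomSer d * (1 - qv ^ d) = 1 := by
  apply MvPowerSeries.ext
  intro s
  rw [mul_sub, mul_one, map_sub, qv_pow_monomial, MvPowerSeries.coeff_mul_monomial,
    MvPowerSeries.coeff_one, coeff_geomSer]
  simp only [coeff_geomSer, fin2_le_iff, fin2_sub_apply0, fin2_sub_apply1,
    fin2_single_add_apply0, fin2_single_add_apply1, fin2_eq_zero_iff, mul_one,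
    Nat.sub_zero, Nat.zero_le, and_true]
  have hdvdsub : d ≤ s 0 → (d ∣ s 0 - d ↔ d ∣ s 0) := fun h =>
    ⟨fun hh => by
        have e : s 0 - d + d = s 0 := by omega
        exact e ▸ Nat.dvd_add hh dvd_rfl,
      fun hh => Nat.dvd_sub hh dvd_rfl⟩
  by_cases h1 : s 1 = 0
  · by_cases h0 : d ≤ s 0
    · by_cases h2 : d ∣ s 0
      · have hs0 : ¬ (s 0 = 0) := by omega
        simp [h1, h0, h2, (hdvdsub h0).2 h2, hs0]
      · have h3 : ¬ d ∣ s 0 - d := fun hc => h2 ((hdvdsub h0).1 hc)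
        have hs0 : ¬ (s 0 = 0) := fun h => h2 (h ▸ dvd_zero d)
        simp [h1, h0, h2, h3, hs0]
    · by_cases h2 : d ∣ s 0
      · have hs0 : s 0 = 0 := by
          rcases Nat.eq_zero_or_pos (s 0) with h | h
          · exact h
          · exact absurd (Nat.le_of_dvd h h2) h0
        have hd0 : ¬ d = 0 := by omega
        simp [h1, h0, h2, hs0, hd0]
      · have hs0 : ¬ (s 0 = 0) := fun h => h2 (h ▸ dvd_zero d)
        simp [h1, h0, h2, hs0]
  · simp [h1]

lemma inv_one_sub_pow (d : ℕ) (hd : 1 ≤ d) : (1 - qv ^ d)⁻¹ = geomSer d := by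
  have hc : MvPowerSeries.constantCoeff (1 - qv ^ d) ≠ 0 := by
    rw [map_sub, map_one, map_pow, qv, MvPowerSeries.constantCoeff_X,
      zero_pow (by omega : d ≠ 0), sub_zero]
    exact one_ne_zero
  rw [MvPowerSeries.inv_eq_iff_mul_eq_one hc]
  exact geom_mul d hd

lemma aux1 (a t : ℕ) :
    ((if a = 0 ∧ t = 0 then (1 : ℚ) else 0) + (if a = 1 ∧ t = 0 then 1 else 0)
      + (if 2 ≤ a ∧ 1 ≤ t then (if t - 1 = 0 then (1 : ℚ) else 0) else 0))
    = if t = (if 2 ≤ a then 1 else 0) then 1 else 0 := by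
  split_ifs <;> first | (exfalso; omega) | norm_num

lemma aux2 (d a t : ℕ) (hd : 1 ≤ d) :
    ((if d * a = 0 ∧ t = 0 then (1 : ℚ) else 0) + (if d * a = d ∧ t = 1 then 1 else 0)
      + (if 2 * d ≤ d * a ∧ 2 ≤ t then
          (if d ∣ d * a - 2 * d ∧ t - 2 = 0 then (1 : ℚ) else 0) else 0))
    = if d ∣ d * a ∧ t = min a 2 then 1 else 0 := by
  have h1 : d * a = 0 ↔ a = 0 := by
    rw [Nat.mul_eq_zero]; omega
  have h2 : d * a = d ↔ a = 1 := by
    constructor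
    · intro h
      exact Nat.eq_of_mul_eq_mul_left (show 0 < d by omega) (by omega)
    · intro h; subst h; omega
  have h3 : 2 * d ≤ d * a ↔ 2 ≤ a := by
    constructor
    · intro h
      by_contra hc
      push_neg at hc
      interval_cases a <;> omega
    · intro h
      have := Nat.mul_le_mul_left d h
      omega
  have h4 : d ∣ d * a - 2 * d := by
    have e : d * a - 2 * d = d * (a - 2) := by
      rw [Nat.mul_sub]; omega
    exact e ▸ Dvd.intro _ rfl
  have h5 : d ∣ d * a := ⟨a, rfl⟩
  simp only [h1, h2, h3, iff_true_intro h4, iff_true_intro h5, true_and]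
  split_ifs <;> first | (exfalso; omega) | norm_num

lemma factor_one : 1 + qv + zv * qv ^ 2 * (1 - qv)⁻¹ = Gser 1 := by
  have hg : (1 - qv)⁻¹ = geomSer 1 := by
    have := inv_one_sub_pow 1 le_rfl
    rwa [pow_one] at this
  rw [hg]
  apply MvPowerSeries.ext
  intro s
  have h2 : qv = MvPowerSeries.monomial (Finsupp.single 0 1 + Finsupp.single 1 0) 1 := by
    rw [← pow_one qv, qv_pow_monomial]
  have h3 : zv * qv ^ 2 * geomSer 1
      = MvPowerSeries.monomial (Finsupp.single 0 2 + Finsupp.single 1 1) 1 * geomSer 1 := by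
    rw [← pow_one zv, zq_monomial]
  rw [map_add, map_add, MvPowerSeries.coeff_one, h3, h2, MvPowerSeries.coeff_monomial,
    MvPowerSeries.coeff_monomial_mul, coeff_Gser]
  simp only [one_mul, coeff_geomSer, fin2_le_iff, fin2_sub_apply0, fin2_sub_apply1,
    fin2_single_add_apply0, fin2_single_add_apply1, fin2_eq_zero_iff, fin2_eq_iff,
    Nat.one_dvd, true_and, Nat.div_one, eexp, if_pos rfl]
  norm_num
  exact aux1 (s 0) (s 1)

lemma factor_eq (k : ℕ) (hk : 2 ≤ k) :
    1 + zv * qv ^ (2 * k - 1) + zv ^ 2 * qv ^ (2 * (2 * k - 1)) * (1 - qv ^ (2 * k - 1))⁻¹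
      = Gser k := by
  have hd : 1 ≤ 2 * k - 1 := by omega
  rw [inv_one_sub_pow (2 * k - 1) hd]
  apply MvPowerSeries.ext
  intro s
  have h2 : zv * qv ^ (2 * k - 1)
      = MvPowerSeries.monomial (Finsupp.single 0 (2 * k - 1) + Finsupp.single 1 1) 1 := by
    rw [← pow_one zv, zq_monomial]
  have h3 : zv ^ 2 * qv ^ (2 * (2 * k - 1)) * geomSer (2 * k - 1)
      = MvPowerSeries.monomial (Finsupp.single 0 (2 * (2 * k - 1)) + Finsupp.single 1 2) 1
          * geomSer (2 * k - 1) := by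
    rw [zq_monomial]
  rw [map_add, map_add, MvPowerSeries.coeff_one, h3, h2, MvPowerSeries.coeff_monomial,
    MvPowerSeries.coeff_monomial_mul, coeff_Gser]
  simp only [one_mul, coeff_geomSer, fin2_le_iff, fin2_sub_apply0, fin2_sub_apply1,
    fin2_single_add_apply0, fin2_single_add_apply1, fin2_eq_zero_iff, fin2_eq_iff,
    eexp, if_neg (by omega : ¬ k = 1)]
  by_cases hdvd : (2 * k - 1) ∣ s 0
  · obtain ⟨a, ha⟩ := hdvd
    have hdiv' : (2 * k - 1) * a / (2 * k - 1) = a :=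
      Nat.mul_div_cancel_left a (by omega)
    simp only [ha, hdiv']
    exact aux2 (2 * k - 1) a (s 1) hd
  · have k1 : ¬ (s 0 = 0 ∧ s 1 = 0) := fun h => hdvd (h.1 ▸ dvd_zero _)
    have k2 : ¬ (s 0 = 2 * k - 1 ∧ s 1 = 1) := fun h => hdvd (h.1 ▸ dvd_rfl)
    have k4 : ¬ ((2 * k - 1) ∣ s 0 ∧ s 1 = min (s 0 / (2 * k - 1)) 2) := fun h => hdvd h.1
    rw [if_neg k1, if_neg k2, if_neg k4]
    by_cases hc : 2 * (2 * k - 1) ≤ s 0 ∧ 2 ≤ s 1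
    · rw [if_pos hc, if_neg ?_]
      · norm_num
      rintro ⟨hdd, -⟩
      apply hdvd
      have e : s 0 = (s 0 - 2 * (2 * k - 1)) + 2 * (2 * k - 1) := by omega
      rw [e]
      exact Nat.dvd_add hdd ⟨2, by ring⟩
    · rw [if_neg hc]; norm_num

lemma coeff_RHS (L : ℕ) (hL : 0 < L) (s : Fin 2 →₀ ℕ) :
    MvPowerSeries.coeff s
      ((1 + qv + zv * qv ^ 2 * (1 - qv)⁻¹) *
        ∏ k ∈ Finset.Icc 2 L,
          (1 + zv * qv ^ (2 * k - 1) + zv ^ 2 * qv ^ (2 * (2 * k - 1)) * (1 - qv ^ (2 * k - 1))⁻¹))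
      = (((Finset.finsuppAntidiag (Finset.Icc 1 L) s).filter
          (fun l => ∀ k ∈ Finset.Icc 1 L,
            (2 * k - 1) ∣ (l k) 0 ∧ (l k) 1 = eexp k ((l k) 0 / (2 * k - 1)))).card : ℚ) := by
  classical
  rw [factor_one, Finset.prod_congr rfl (fun k hk => factor_eq k (Finset.mem_Icc.1 hk).1)]
  have hnot : (1 : ℕ) ∉ Finset.Icc 2 L := by simp
  have hins : Finset.Icc 1 L = insert 1 (Finset.Icc 2 L) := by
    ext x; simp only [Finset.mem_Icc, Finset.mem_insert]; omega
  rw [show Gser 1 * ∏ k ∈ Finset.Icc 2 L, Gser k = ∏ k ∈ Finset.Icc 1 L, Gser k by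
    rw [hins, Finset.prod_insert hnot]]
  rw [MvPowerSeries.coeff_prod]
  rw [Finset.sum_congr rfl (fun l _ => show _ = if (∀ k ∈ Finset.Icc 1 L,
        (2 * k - 1) ∣ (l k) 0 ∧ (l k) 1 = eexp k ((l k) 0 / (2 * k - 1))) then (1:ℚ) else 0 by
      rw [Finset.prod_congr rfl (fun k _ => coeff_Gser k (l k)), Finset.prod_boole])]
  rw [Finset.sum_boole]


lemma multiset_sum_eq (P : Multiset ℕ) : P.sum = ∑ d ∈ P.toFinset, P.count d * d := by
  conv_lhs => rw [← Multiset.toFinset_sum_count_nsmul_eq P]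
  rw [← Multiset.coe_sumAddMonoidHom, map_sum]
  apply Finset.sum_congr rfl
  intro d _
  simp [Multiset.coe_sumAddMonoidHom, Multiset.nsmul_singleton, Multiset.sum_replicate,
    smul_eq_mul]

lemma sum_reindex (L : ℕ) (P : Multiset ℕ) (hodd : ∀ p ∈ P, Odd p)
    (hbd : ∀ p ∈ P, p ≤ 2 * L - 1) (f : ℕ → ℕ → ℕ) (hf : ∀ d, f d 0 = 0) :
    ∑ k ∈ Finset.Icc 1 L, f (2 * k - 1) (P.count (2 * k - 1))
      = ∑ d ∈ P.toFinset, f d (P.count d) := by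
  classical
  have hinj : ∀ x ∈ Finset.Icc 1 L, ∀ y ∈ Finset.Icc 1 L,
      (fun k => 2 * k - 1) x = (fun k => 2 * k - 1) y → x = y := by
    intro x hx y hy h
    simp only [Finset.mem_Icc] at hx hy
    simp only at h
    omega
  have himg : ∑ d ∈ (Finset.Icc 1 L).image (fun k => 2 * k - 1), f d (P.count d)
      = ∑ k ∈ Finset.Icc 1 L, f (2 * k - 1) (P.count (2 * k - 1)) :=
    Finset.sum_image hinj
  rw [← himg]
  have hsub : P.toFinset ⊆ (Finset.Icc 1 L).image (fun k => 2 * k - 1) := by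
    intro d hd
    rw [Multiset.mem_toFinset] at hd
    have h1 := Nat.odd_iff.1 (hodd d hd)
    have h2 := hbd d hd
    have h3 : 1 ≤ d := (hodd d hd).pos
    simp only [Finset.mem_image, Finset.mem_Icc]
    exact ⟨(d + 1) / 2, ⟨by omega, by omega⟩, by omega⟩
  refine (Finset.sum_subset hsub ?_).symm
  intro d _ hnd
  rw [Multiset.mem_toFinset] at hnd
  rw [Multiset.count_eq_zero_of_notMem hnd, hf]

lemma sum_mul_count_eq (L : ℕ) (P : Multiset ℕ) (hodd : ∀ p ∈ P, Odd p)
    (hbd : ∀ p ∈ P, p ≤ 2 * L - 1) :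
    ∑ k ∈ Finset.Icc 1 L, (2 * k - 1) * P.count (2 * k - 1) = P.sum := by
  have h := sum_reindex L P hodd hbd (fun d a => d * a) (fun d => by simp)
  rw [multiset_sum_eq]
  exact h.trans (Finset.sum_congr rfl fun d _ => mul_comm _ _)

def gfun (d a : ℕ) : ℕ := (if 3 ≤ d ∧ 1 ≤ a then 1 else 0) + (if 2 ≤ a then 1 else 0)

lemma sum_eexp_eq (L : ℕ) (P : Multiset ℕ) (hodd : ∀ p ∈ P, Odd p)
    (hbd : ∀ p ∈ P, p ≤ 2 * L - 1) :
    ∑ k ∈ Finset.Icc 1 L, eexp k (P.count (2 * k - 1)) = hookCount P 2 := by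
  classical
  rw [hookCount_two_eq P hodd]
  have step1 : ∑ k ∈ Finset.Icc 1 L, eexp k (P.count (2 * k - 1))
      = ∑ k ∈ Finset.Icc 1 L, gfun (2 * k - 1) (P.count (2 * k - 1)) := by
    apply Finset.sum_congr rfl
    intro k hk
    have hk1 : 1 ≤ k := (Finset.mem_Icc.1 hk).1
    unfold eexp gfun
    split_ifs <;> omega
  rw [step1]
  rw [sum_reindex L P hodd hbd gfun (fun d => by simp [gfun])]
  unfold gfun
  rw [Finset.sum_add_distrib]
  congr 1
  · rw [Finset.card_filter]
    apply Finset.sum_congr rfl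
    intro d hd
    have hc : 1 ≤ P.count d := Multiset.count_pos.2 (Multiset.mem_toFinset.1 hd)
    split_ifs <;> omega
  · rw [Finset.card_filter]

noncomputable def Lmap (L : ℕ) (P : Multiset ℕ) : ℕ →₀ (Fin 2 →₀ ℕ) :=
  Finsupp.onFinset (Finset.Icc 1 L)
    (fun k => if k ∈ Finset.Icc 1 L then
        Finsupp.single 0 ((2 * k - 1) * P.count (2 * k - 1))
          + Finsupp.single 1 (eexp k (P.count (2 * k - 1)))
      else 0)
    (fun k h => by by_contra hc; simp [hc] at h)

lemma Lmap_apply_mem {L k : ℕ} (P : Multiset ℕ) (hk : k ∈ Finset.Icc 1 L) :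
    Lmap L P k = Finsupp.single 0 ((2 * k - 1) * P.count (2 * k - 1))
      + Finsupp.single 1 (eexp k (P.count (2 * k - 1))) := by
  unfold Lmap
  rw [Finsupp.onFinset_apply, if_pos hk]

lemma Lmap_apply_not {L k : ℕ} (P : Multiset ℕ) (hk : k ∉ Finset.Icc 1 L) :
    Lmap L P k = 0 := by
  unfold Lmap
  rw [Finsupp.onFinset_apply, if_neg hk]

lemma Lmap_support (L : ℕ) (P : Multiset ℕ) :
    (Lmap L P).support ⊆ Finset.Icc 1 L :=
  Finsupp.support_onFinset_subset

lemma Lmap_sum (L : ℕ) (P : Multiset ℕ) :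
    ∑ k ∈ Finset.Icc 1 L, Lmap L P k
      = Finsupp.single 0 (∑ k ∈ Finset.Icc 1 L, (2 * k - 1) * P.count (2 * k - 1))
        + Finsupp.single 1 (∑ k ∈ Finset.Icc 1 L, eexp k (P.count (2 * k - 1))) := by
  have e0 : Finsupp.single (0 : Fin 2) (∑ k ∈ Finset.Icc 1 L, (2 * k - 1) * P.count (2 * k - 1))
      = ∑ k ∈ Finset.Icc 1 L, Finsupp.single (0 : Fin 2) ((2 * k - 1) * P.count (2 * k - 1)) :=
    map_sum (Finsupp.singleAddHom (0 : Fin 2)) _ _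
  have e1 : Finsupp.single (1 : Fin 2) (∑ k ∈ Finset.Icc 1 L, eexp k (P.count (2 * k - 1)))
      = ∑ k ∈ Finset.Icc 1 L, Finsupp.single (1 : Fin 2) (eexp k (P.count (2 * k - 1))) :=
    map_sum (Finsupp.singleAddHom (1 : Fin 2)) _ _
  rw [Finset.sum_congr rfl (fun k hk => Lmap_apply_mem P hk), Finset.sum_add_distrib, e0, e1]

lemma mem_V_iff (L m n : ℕ) (π : Nat.Partition n) :
    π ∈ (Nat.Partition.odds n).filter
        (fun π => (∀ p ∈ π.parts, p ≤ 2 * L - 1) ∧ hookCount π.parts 2 = m)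
      ↔ (∀ p ∈ π.parts, Odd p) ∧ (∀ p ∈ π.parts, p ≤ 2 * L - 1)
          ∧ hookCount π.parts 2 = m := by
  rw [Finset.mem_filter, Nat.Partition.odds, Nat.Partition.restricted, Finset.mem_filter]
  simp only [Finset.mem_univ, true_and, Nat.not_even_iff_odd, and_assoc]

lemma card_W_eq (L m n : ℕ) (hL : 0 < L) :
    ((Finset.finsuppAntidiag (Finset.Icc 1 L)
          ((Finsupp.single 0 n + Finsupp.single 1 m : Fin 2 →₀ ℕ))).filter
        (fun l => ∀ k ∈ Finset.Icc 1 L,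
          (2 * k - 1) ∣ (l k) 0 ∧ (l k) 1 = eexp k ((l k) 0 / (2 * k - 1)))).card
      = a2Lmn L m n := by
  classical
  rw [a2Lmn]
  symm
  refine Finset.card_bij (fun π _ => Lmap L π.parts) ?_ ?_ ?_
  · -- well-defined
    intro π hπ
    rw [mem_V_iff] at hπ
    obtain ⟨hodd, hbd, hhook⟩ := hπ
    rw [Finset.mem_filter, Finset.mem_finsuppAntidiag]
    refine ⟨⟨?_, Lmap_support L _⟩, ?_⟩
    · rw [Lmap_sum, sum_mul_count_eq L _ hodd hbd, sum_eexp_eq L _ hodd hbd,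
        π.parts_sum, hhook]
    · intro k hk
      rw [Lmap_apply_mem _ hk]
      rw [fin2_single_add_apply0, fin2_single_add_apply1]
      have hkpos : 0 < 2 * k - 1 := by
        have := (Finset.mem_Icc.1 hk).1; omega
      refine ⟨⟨_, rfl⟩, ?_⟩
      rw [Nat.mul_div_cancel_left _ hkpos]
  · -- injective
    intro π₁ h₁ π₂ h₂ heq
    rw [mem_V_iff] at h₁ h₂
    apply Nat.Partition.ext
    rw [Multiset.ext]
    intro d
    by_cases hd : Odd d ∧ d ≤ 2 * L - 1
    · have hdodd := Nat.odd_iff.1 hd.1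
      set k := (d + 1) / 2 with hkd
      have hk : k ∈ Finset.Icc 1 L := by
        rw [Finset.mem_Icc]; omega
      have hk2 : 2 * k - 1 = d := by omega
      have happ := DFunLike.congr_fun heq k
      rw [Lmap_apply_mem _ hk, Lmap_apply_mem _ hk] at happ
      have h0 := congrArg (fun t => t 0) happ
      simp only [fin2_single_add_apply0] at h0
      have := Nat.eq_of_mul_eq_mul_left (show 0 < 2 * k - 1 by omega) h0
      rwa [hk2] at this
    · have hd1 : d ∉ π₁.parts := by
        intro hc
        exact hd ⟨h₁.1 d hc, h₁.2.1 d hc⟩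
      have hd2 : d ∉ π₂.parts := by
        intro hc
        exact hd ⟨h₂.1 d hc, h₂.2.1 d hc⟩
      rw [Multiset.count_eq_zero_of_notMem hd1, Multiset.count_eq_zero_of_notMem hd2]
  · -- surjective
    intro l hl
    rw [Finset.mem_filter, Finset.mem_finsuppAntidiag] at hl
    obtain ⟨⟨hsum, hsupp⟩, hPred⟩ := hl
    set a : ℕ → ℕ := fun k => (l k) 0 / (2 * k - 1) with ha
    set P : Multiset ℕ := ∑ k ∈ Finset.Icc 1 L, Multiset.replicate (a k) (2 * k - 1)
      with hPdef
    have hcount : ∀ k ∈ Finset.Icc 1 L, P.count (2 * k - 1) = a k := by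
      intro k hk
      rw [hPdef, Multiset.count_sum']
      rw [Finset.sum_eq_single k]
      · rw [Multiset.count_replicate, if_pos rfl]
      · intro b hb hbk
        rw [Multiset.count_replicate, if_neg]
        have hb1 := (Finset.mem_Icc.1 hb).1
        have hk1 := (Finset.mem_Icc.1 hk).1
        omega
      · intro hk'
        exact absurd hk hk'
    have hl0 : ∀ k ∈ Finset.Icc 1 L, (l k) 0 = (2 * k - 1) * a k := by
      intro k hk
      exact (Nat.mul_div_cancel' (hPred k hk).1).symm
    have hmemP : ∀ p ∈ P, ∃ k, k ∈ Finset.Icc 1 L ∧ p = 2 * k - 1 := by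
      intro p hp
      rw [hPdef, Multiset.mem_sum] at hp
      obtain ⟨k, hk, hpk⟩ := hp
      rw [Multiset.eq_of_mem_replicate hpk]
      exact ⟨k, hk, rfl⟩
    have hodd : ∀ p ∈ P, Odd p := by
      intro p hp
      obtain ⟨k, hk, rfl⟩ := hmemP p hp
      have := (Finset.mem_Icc.1 hk).1
      rw [Nat.odd_iff]; omega
    have hbd : ∀ p ∈ P, p ≤ 2 * L - 1 := by
      intro p hp
      obtain ⟨k, hk, rfl⟩ := hmemP p hp
      have := (Finset.mem_Icc.1 hk).2
      omega
    have hpos : ∀ {p : ℕ}, p ∈ P → 0 < p := by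
      intro p hp
      obtain ⟨k, hk, rfl⟩ := hmemP p hp
      have := (Finset.mem_Icc.1 hk).1
      omega
    have hsum0 : (∑ k ∈ Finset.Icc 1 L, (l k) 0) = n := by
      rw [← Finsupp.finset_sum_apply, hsum, fin2_single_add_apply0]
    have hsum1 : (∑ k ∈ Finset.Icc 1 L, (l k) 1) = m := by
      rw [← Finsupp.finset_sum_apply, hsum, fin2_single_add_apply1]
    have hPsum : P.sum = n := by
      rw [← sum_mul_count_eq L P hodd hbd, ← hsum0]
      apply Finset.sum_congr rfl
      intro k hk
      rw [hcount k hk, hl0 k hk]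
    refine ⟨⟨P, hpos, hPsum⟩, ?_, ?_⟩
    · rw [mem_V_iff]
      refine ⟨hodd, hbd, ?_⟩
      rw [← sum_eexp_eq L P hodd hbd, ← hsum1]
      apply Finset.sum_congr rfl
      intro k hk
      rw [hcount k hk, (hPred k hk).2]
    · apply Finsupp.ext
      intro k
      by_cases hk : k ∈ Finset.Icc 1 L
      · rw [Lmap_apply_mem _ hk]
        show _ = l k
        symm
        rw [fin2_eq_iff]
        refine ⟨?_, ?_⟩
        · rw [hcount k hk]
          exact hl0 k hk
        · rw [hcount k hk]
          exact (hPred k hk).2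
      · rw [Lmap_apply_not _ hk]
        symm
        rw [← Finsupp.notMem_support_iff]
        exact fun hc => hk (hsupp hc)


theorem a2L_bivariate_gen_fun (L : ℕ) (hL : 0 < L) (n m : ℕ) :
    MvPowerSeries.coeff (σ := Fin 2) (R := ℚ) (Finsupp.single 0 n + Finsupp.single 1 m)
      ((1 + qv + zv * qv ^ 2 * (1 - qv)⁻¹) *
        ∏ k ∈ Finset.Icc 2 L,
          (1 + zv * qv ^ (2 * k - 1) + zv ^ 2 * qv ^ (2 * (2 * k - 1)) * (1 - qv ^ (2 * k - 1))⁻¹))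
      = (a2Lmn L m n : ℚ) := by
  rw [coeff_RHS L hL _, card_W_eq L m n hL]
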